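/- The function (x,y) ↦ ∫₀^∞ (k e^{ky}/(k−1)) [sin k(x − π) − sin k(x + π)] dk is harmonic in the open lower half-plane away from the points (±π, 0). -/

import Mathlib

open Real MeasureTheory Set

noncomputable section TrappedMode

/-- The derivative "matrix" `(a, b)` as a continuous linear map `ℝ × ℝ →L[ℝ] ℝ`. -/
def D2 (a b : ℝ) : (ℝ × ℝ) →L[ℝ] ℝ :=
  a • ContinuousLinearMap.fst ℝ ℝ ℝ + b • ContinuousLinearMap.snd ℝ ℝ ℝ

lemma D2_apply (a b : ℝ) (v : ℝ × ℝ) : D2 a b v = a * v.1 + b * v.2 := by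
  simp [D2, smul_eq_mul]

lemma D2_smul (s a b : ℝ) : s • D2 a b = D2 (s * a) (s * b) := by
  unfold D2
  rw [smul_add, smul_smul, smul_smul]

lemma norm_D2_le (a b : ℝ) : ‖D2 a b‖ ≤ |a| + |b| := by
  refine ContinuousLinearMap.opNorm_le_bound _ (by positivity) fun v => ?_
  rw [D2_apply]
  calc ‖a * v.1 + b * v.2‖ ≤ ‖a * v.1‖ + ‖b * v.2‖ := norm_add_le _ _
    _ ≤ |a| * ‖v‖ + |b| * ‖v‖ := by
        rw [norm_mul, norm_mul, Real.norm_eq_abs, Real.norm_eq_abs]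
        gcongr
        · exact (Real.norm_eq_abs v.1) ▸ norm_fst_le v
        · exact (Real.norm_eq_abs b).le
        · exact norm_snd_le v
    _ = (|a| + |b|) * ‖v‖ := by ring

/-- The basic harmonic wave family. -/
def W (θ k : ℝ) (p : ℝ × ℝ) : ℝ := Real.exp (k * p.2) * Real.cos (k * p.1 + θ)

lemma abs_W_le (θ k : ℝ) (p : ℝ × ℝ) : |W θ k p| ≤ Real.exp (k * p.2) := by
  rw [W, abs_mul, Real.abs_exp]
  calc Real.exp (k * p.2) * |Real.cos (k * p.1 + θ)| ≤ Real.exp (k * p.2) * 1 := by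
        gcongr
        exact Real.abs_cos_le_one _
    _ = Real.exp (k * p.2) := mul_one _

lemma measurable_W (θ : ℝ) (q : ℝ × ℝ) : Measurable fun k => W θ k q := by
  unfold W
  fun_prop

lemma hasFDerivAt_W (θ k : ℝ) (p : ℝ × ℝ) :
    HasFDerivAt (W θ k) (D2 (k * W (θ + π / 2) k p) (k * W θ k p)) p := by
  have h1 : HasFDerivAt (fun q : ℝ × ℝ => Real.exp (k * q.2))
      ((Real.exp (k * p.2) * (k * 1)) • ContinuousLinearMap.snd ℝ ℝ ℝ) p :=
    (((hasDerivAt_id p.2).const_mul k).exp).comp_hasFDerivAt p (hasFDerivAt_snd)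
  have h2 : HasFDerivAt (fun q : ℝ × ℝ => Real.cos (k * q.1 + θ))
      ((-Real.sin (k * p.1 + θ) * (k * 1)) • ContinuousLinearMap.fst ℝ ℝ ℝ) p :=
    ((((hasDerivAt_id p.1).const_mul k).add_const θ).cos).comp_hasFDerivAt p (hasFDerivAt_fst)
  have h := h1.mul h2
  have heq : Real.exp (k * p.2) • (-Real.sin (k * p.1 + θ) * (k * 1)) • ContinuousLinearMap.fst ℝ ℝ ℝ +
      Real.cos (k * p.1 + θ) • (Real.exp (k * p.2) * (k * 1)) • ContinuousLinearMap.snd ℝ ℝ ℝ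
      = D2 (k * W (θ + π / 2) k p) (k * W θ k p) := by
    refine ContinuousLinearMap.ext fun v => ?_
    simp only [D2_apply, W, ContinuousLinearMap.add_apply, ContinuousLinearMap.smul_apply,
      ContinuousLinearMap.coe_fst', ContinuousLinearMap.coe_snd', smul_eq_mul]
    rw [show k * p.1 + (θ + π / 2) = (k * p.1 + θ) + π / 2 by ring, Real.cos_add_pi_div_two]
    ring
  exact heq ▸ h

lemma hasFDerivAt_term (a : ℝ → ℝ) (θ k : ℝ) (q : ℝ × ℝ) :
    HasFDerivAt (fun r => a k * W θ k r)
      (D2 (a k * k * W (θ + π / 2) k q) (a k * k * W θ k q)) q := by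
  have h := (hasFDerivAt_W θ k q).const_mul (a k)
  rwa [D2_smul, ← mul_assoc, ← mul_assoc] at h

lemma integrableOn_pow_mul_exp (n : ℕ) {b : ℝ} (hb : b < 0) :
    IntegrableOn (fun k : ℝ => k ^ n * Real.exp (b * k)) (Ioi (0 : ℝ)) := by
  have h0 : (0 : ℝ) < -b / 2 := by linarith
  refine integrable_of_isBigO_exp_neg h0 (by fun_prop) ?_
  have ht : Filter.Tendsto (fun k : ℝ => k ^ n * Real.exp (b * k) / Real.exp (-(-b / 2) * k))
      Filter.atTop (nhds 0) := by
    have h := tendsto_rpow_mul_exp_neg_mul_atTop_nhds_zero (n : ℝ) (-b / 2) h0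
    refine h.congr' ?_
    filter_upwards [Filter.eventually_gt_atTop (0 : ℝ)] with k hk
    rw [Real.rpow_natCast, mul_div_assoc, ← Real.exp_sub]
    ring_nf
  exact (Asymptotics.isLittleO_iff_tendsto (fun k hk =>
    absurd hk (Real.exp_ne_zero _)) |>.mpr ht).isBigO

section Key

variable {a : ℝ → ℝ} {C : ℝ} {m : ℕ}

lemma abs_term_le (hbd : ∀ k ∈ Ioi (0 : ℝ), |a k| ≤ C * k ^ m) (θ : ℝ) {k : ℝ}
    (hk : 0 < k) (q : ℝ × ℝ) :
    |a k * k * W θ k q| ≤ C * k ^ (m + 1) * Real.exp (k * q.2) := by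
  rw [abs_mul]
  have h1 : |a k * k| ≤ C * k ^ (m + 1) := by
    rw [abs_mul, abs_of_pos hk, pow_succ, ← mul_assoc]
    exact mul_le_mul_of_nonneg_right (hbd k hk) hk.le
  exact mul_le_mul h1 (abs_W_le θ k q) (abs_nonneg _) (by
    have := (abs_nonneg (a k * k)).trans h1
    positivity)

lemma measurable_term (ha : Measurable a) (θ : ℝ) (q : ℝ × ℝ) :
    Measurable fun k => a k * k * W θ k q :=
  (ha.mul measurable_id).mul (measurable_W θ q)

lemma aesm_D2 (ha : Measurable a) (θ : ℝ) (q : ℝ × ℝ) :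
    AEStronglyMeasurable
      (fun k => D2 (a k * k * W (θ + π / 2) k q) (a k * k * W θ k q))
      (volume.restrict (Ioi (0 : ℝ))) := by
  have hcont : Continuous fun x : ℝ × ℝ => D2 x.1 x.2 := by
    unfold D2
    exact (continuous_fst.smul continuous_const).add (continuous_snd.smul continuous_const)
  exact hcont.comp_aestronglyMeasurable
    (((measurable_term ha (θ + π / 2) q).prodMk (measurable_term ha θ q)).aestronglyMeasurable)

lemma D2_integrable (ha : Measurable a) (hbd : ∀ k ∈ Ioi (0 : ℝ), |a k| ≤ C * k ^ m)
    (θ : ℝ) {q : ℝ × ℝ} (hq : q.2 < 0) :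
    Integrable (fun k => D2 (a k * k * W (θ + π / 2) k q) (a k * k * W θ k q))
      (volume.restrict (Ioi (0 : ℝ))) := by
  refine (((integrableOn_pow_mul_exp (m + 1) hq).const_mul (2 * C)).mono'
    (aesm_D2 ha θ q) ?_)
  rw [ae_restrict_iff' measurableSet_Ioi]
  refine Filter.Eventually.of_forall fun k hk => ?_
  have hk0 : (0 : ℝ) < k := hk
  calc ‖D2 (a k * k * W (θ + π / 2) k q) (a k * k * W θ k q)‖
      ≤ |a k * k * W (θ + π / 2) k q| + |a k * k * W θ k q| := norm_D2_le _ _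
    _ ≤ C * k ^ (m + 1) * Real.exp (k * q.2) + C * k ^ (m + 1) * Real.exp (k * q.2) :=
        add_le_add (abs_term_le hbd _ hk0 q) (abs_term_le hbd _ hk0 q)
    _ = 2 * C * (k ^ (m + 1) * Real.exp (q.2 * k)) := by rw [mul_comm q.2 k]; ring

lemma keyHasFDeriv (ha : Measurable a) (hbd : ∀ k ∈ Ioi (0 : ℝ), |a k| ≤ C * k ^ m)
    (θ : ℝ) {p : ℝ × ℝ} (hp : p.2 < 0) :
    HasFDerivAt (fun q => ∫ k in Ioi (0 : ℝ), a k * W θ k q)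
      (∫ k in Ioi (0 : ℝ), D2 (a k * k * W (θ + π / 2) k p) (a k * k * W θ k p)) p := by
  have hC : 0 ≤ C := by
    have h := hbd 1 (mem_Ioi.mpr one_pos)
    simpa using (abs_nonneg (a 1)).trans h
  have hε0 : (0 : ℝ) < -p.2 / 2 := by linarith
  refine hasFDerivAt_integral_of_dominated_of_fderiv_le (s := Metric.ball p (-p.2 / 2))
      (F' := fun q k => D2 (a k * k * W (θ + π / 2) k q) (a k * k * W θ k q))
      (bound := fun k => 2 * C * (k ^ (m + 1) * Real.exp (p.2 / 2 * k)))
      (Metric.ball_mem_nhds p hε0) ?_ ?_ ?_ ?_ ?_ ?_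
  · exact Filter.Eventually.of_forall fun q =>
      ((ha.mul (measurable_W θ q)).aestronglyMeasurable)
  · refine ((integrableOn_pow_mul_exp m hp).const_mul C).mono'
      ((ha.mul (measurable_W θ p)).aestronglyMeasurable) ?_
    rw [ae_restrict_iff' measurableSet_Ioi]
    refine Filter.Eventually.of_forall fun k hk => ?_
    have hk0 : (0 : ℝ) < k := hk
    rw [Real.norm_eq_abs, abs_mul]
    calc |a k| * |W θ k p| ≤ (C * k ^ m) * Real.exp (k * p.2) :=
          mul_le_mul (hbd k hk0) (abs_W_le θ k p) (abs_nonneg _) (by positivity)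
      _ = C * (k ^ m * Real.exp (p.2 * k)) := by rw [mul_comm p.2 k]; ring
  · exact aesm_D2 ha θ p
  · rw [ae_restrict_iff' measurableSet_Ioi]
    refine Filter.Eventually.of_forall fun k hk q hq => ?_
    have hk0 : (0 : ℝ) < k := hk
    have hq2 : q.2 ≤ p.2 / 2 := by
      have h1 : dist q.2 p.2 ≤ dist q p := by
        rw [Prod.dist_eq]; exact le_max_right _ _
      have h2 : dist q p < -p.2 / 2 := Metric.mem_ball.mp hq
      have h3 : q.2 - p.2 ≤ |q.2 - p.2| := le_abs_self _
      rw [Real.dist_eq] at h1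
      linarith
    have hexp : Real.exp (k * q.2) ≤ Real.exp (p.2 / 2 * k) := by
      rw [Real.exp_le_exp]
      calc k * q.2 ≤ k * (p.2 / 2) := mul_le_mul_of_nonneg_left hq2 hk0.le
        _ = p.2 / 2 * k := mul_comm _ _
    calc ‖D2 (a k * k * W (θ + π / 2) k q) (a k * k * W θ k q)‖
        ≤ |a k * k * W (θ + π / 2) k q| + |a k * k * W θ k q| := norm_D2_le _ _
      _ ≤ C * k ^ (m + 1) * Real.exp (k * q.2) + C * k ^ (m + 1) * Real.exp (k * q.2) :=
          add_le_add (abs_term_le hbd _ hk0 q) (abs_term_le hbd _ hk0 q)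
      _ ≤ C * k ^ (m + 1) * Real.exp (p.2 / 2 * k) + C * k ^ (m + 1) * Real.exp (p.2 / 2 * k) := by
          gcongr
      _ = 2 * C * (k ^ (m + 1) * Real.exp (p.2 / 2 * k)) := by ring
  · exact ((integrableOn_pow_mul_exp (m + 1) (by linarith : p.2 / 2 < 0)).const_mul (2 * C))
  · exact Filter.Eventually.of_forall fun k q _ => hasFDerivAt_term a θ k q

lemma fderiv_eval_fst (ha : Measurable a) (hbd : ∀ k ∈ Ioi (0 : ℝ), |a k| ≤ C * k ^ m)
    (θ : ℝ) {q : ℝ × ℝ} (hq : q.2 < 0) :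
    fderiv ℝ (fun r => ∫ k in Ioi (0 : ℝ), a k * W θ k r) q (1, 0)
      = ∫ k in Ioi (0 : ℝ), (a k * k) * W (θ + π / 2) k q := by
  rw [(keyHasFDeriv ha hbd θ hq).fderiv,
    ContinuousLinearMap.integral_apply (D2_integrable ha hbd θ hq)]
  refine integral_congr_ae (Filter.Eventually.of_forall fun k => ?_)
  simp [D2_apply, mul_assoc]

lemma fderiv_eval_snd (ha : Measurable a) (hbd : ∀ k ∈ Ioi (0 : ℝ), |a k| ≤ C * k ^ m)
    (θ : ℝ) {q : ℝ × ℝ} (hq : q.2 < 0) :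
    fderiv ℝ (fun r => ∫ k in Ioi (0 : ℝ), a k * W θ k r) q (0, 1)
      = ∫ k in Ioi (0 : ℝ), (a k * k) * W θ k q := by
  rw [(keyHasFDeriv ha hbd θ hq).fderiv,
    ContinuousLinearMap.integral_apply (D2_integrable ha hbd θ hq)]
  refine integral_congr_ae (Filter.Eventually.of_forall fun k => ?_)
  simp [D2_apply, mul_assoc]

end Key

/-- The coefficient function of the trapped-mode potential. -/
def cfun (k : ℝ) : ℝ := -2 * k * Real.sin (k * π) / (k - 1)

lemma measurable_cfun : Measurable cfun := by
  unfold cfun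
  fun_prop

lemma abs_cfun_le : ∀ k ∈ Ioi (0 : ℝ), |cfun k| ≤ (2 * π) * k ^ 1 := by
  intro k hk
  have hk0 : (0 : ℝ) < k := hk
  rcases eq_or_ne k 1 with rfl | hne
  · have h0 : cfun 1 = 0 := by simp [cfun, Real.sin_pi]
    rw [h0, abs_zero]
    positivity
  · have hsin : |Real.sin (k * π)| ≤ π * |k - 1| := by
      have h1 : Real.sin (k * π) = -Real.sin ((k - 1) * π) := by
        rw [show k * π = (k - 1) * π + π by ring, Real.sin_add_pi]
      rw [h1, abs_neg]
      calc |Real.sin ((k - 1) * π)| ≤ |(k - 1) * π| := Real.abs_sin_le_abs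
        _ = π * |k - 1| := by rw [abs_mul, abs_of_pos Real.pi_pos, mul_comm]
    have hne' : |k - 1| ≠ 0 := abs_ne_zero.mpr (sub_ne_zero.mpr hne)
    rw [cfun, abs_div, div_le_iff₀ (lt_of_le_of_ne (abs_nonneg _) (Ne.symm hne'))]
    calc |(-2) * k * Real.sin (k * π)| = 2 * k * |Real.sin (k * π)| := by
          rw [abs_mul, abs_mul]
          simp [abs_of_pos hk0]
      _ ≤ 2 * k * (π * |k - 1|) := by
          gcongr
      _ = 2 * π * k ^ 1 * |k - 1| := by ring

lemma abs_mul_id_le {a : ℝ → ℝ} {C : ℝ} {m : ℕ}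
    (hbd : ∀ k ∈ Ioi (0 : ℝ), |a k| ≤ C * k ^ m) :
    ∀ k ∈ Ioi (0 : ℝ), |a k * k| ≤ C * k ^ (m + 1) := by
  intro k hk
  have hk0 : (0 : ℝ) < k := hk
  rw [abs_mul, abs_of_pos hk0, pow_succ, ← mul_assoc]
  exact mul_le_mul_of_nonneg_right (hbd k hk0) hk0.le

end TrappedMode

/-- The nondimensional trapped-mode potential
`φ₀(x,y) = ∫₀^∞ k e^{ky}/(k-1) [sin k(x-π) - sin k(x+π)] dk`
is harmonic in the open lower half-plane (away from the points `(±π,0)`,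
which lie on its boundary). -/
theorem trapped_mode_potential_harmonic :
    ∀ p : ℝ × ℝ, p.2 < 0 →
      fderiv ℝ (fun q : ℝ × ℝ =>
          fderiv ℝ (fun r : ℝ × ℝ =>
            ∫ k in Ioi (0:ℝ),
              k * Real.exp (k * r.2) / (k - 1) *
                (Real.sin (k * (r.1 - π)) - Real.sin (k * (r.1 + π)))) q (1, 0)) p (1, 0)
      + fderiv ℝ (fun q : ℝ × ℝ =>
          fderiv ℝ (fun r : ℝ × ℝ =>
            ∫ k in Ioi (0:ℝ),
              k * Real.exp (k * r.2) / (k - 1) *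
                (Real.sin (k * (r.1 - π)) - Real.sin (k * (r.1 + π)))) q (0, 1)) p (0, 1)
      = 0 := by
  intro p hp
  -- rewrite the integrand in the form `cfun k * W 0 k r`
  have hceq : ∀ r : ℝ × ℝ,
      (∫ k in Ioi (0:ℝ), k * Real.exp (k * r.2) / (k - 1) *
        (Real.sin (k * (r.1 - π)) - Real.sin (k * (r.1 + π))))
      = ∫ k in Ioi (0:ℝ), cfun k * W 0 k r := by
    intro r
    refine integral_congr_ae (Filter.Eventually.of_forall fun k => ?_)
    unfold cfun W
    simp only [mul_sub, mul_add, Real.sin_sub, Real.sin_add, add_zero]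
    ring
  simp only [hceq]
  -- measurability / bounds for the coefficient functions
  have hc := measurable_cfun
  have hbd := abs_cfun_le
  have hc1 : Measurable fun k => cfun k * k := hc.mul measurable_id
  have hbd1 : ∀ k ∈ Ioi (0 : ℝ), |cfun k * k| ≤ (2 * π) * k ^ 2 := abs_mul_id_le hbd
  have hmem : {q : ℝ × ℝ | q.2 < 0} ∈ nhds p :=
    (isOpen_lt continuous_snd continuous_const).mem_nhds hp
  -- first derivatives agree with explicit integrals near `p`
  have e1 : (fun q : ℝ × ℝ =>
        fderiv ℝ (fun r => ∫ k in Ioi (0:ℝ), cfun k * W 0 k r) q (1, 0))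
      =ᶠ[nhds p] fun q => ∫ k in Ioi (0:ℝ), (cfun k * k) * W (0 + π / 2) k q := by
    filter_upwards [hmem] with q hq
    exact fderiv_eval_fst hc hbd 0 hq
  have e2 : (fun q : ℝ × ℝ =>
        fderiv ℝ (fun r => ∫ k in Ioi (0:ℝ), cfun k * W 0 k r) q (0, 1))
      =ᶠ[nhds p] fun q => ∫ k in Ioi (0:ℝ), (cfun k * k) * W 0 k q := by
    filter_upwards [hmem] with q hq
    exact fderiv_eval_snd hc hbd 0 hq
  rw [e1.fderiv_eq, e2.fderiv_eq, fderiv_eval_fst hc1 hbd1 (0 + π / 2) hp,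
    fderiv_eval_snd hc1 hbd1 0 hp]
  have hW : ∀ k : ℝ, (cfun k * k * k) * W (0 + π / 2 + π / 2) k p
      = -((cfun k * k * k) * W 0 k p) := by
    intro k
    unfold W
    rw [show k * p.1 + (0 + π / 2 + π / 2) = k * p.1 + π by ring, Real.cos_add_pi]
    ring
  rw [integral_congr_ae (Filter.Eventually.of_forall hW), integral_neg]
  simp
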